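/- Let X₁, X₂ be independent standard normal random variables, let α ∈ (0, 1/2), and let c = Φ⁻¹(1-α) where Φ is the standard normal CDF. Then for any μ₁, μ₂ ∈ ℝ with μ₁·μ₂ ≥ 0, the probability P((μ₁+X₁)·(μ₂+X₂) < 0 and |μ₁+X₁| > c and |μ₂+X₂| > c) is at most α. -/

import Mathlib

open MeasureTheory ProbabilityTheory

/-- The standard normal distribution on ℝ. -/
noncomputable def stdGauss : Measure ℝ := gaussianReal 0 1

/-- Φ, the standard normal CDF. -/
noncomputable def Φ : ℝ → ℝ := fun x => cdf stdGauss x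

/-- The joint law of two independent standard normals. -/
noncomputable def P2 : Measure (ℝ × ℝ) := stdGauss.prod stdGauss

open Set

instance : IsProbabilityMeasure stdGauss := by
  unfold stdGauss; infer_instance

instance : MeasureTheory.NullSingletonClass stdGauss :=
  ⟨fun x => (gaussianReal_absolutelyContinuous 0 one_ne_zero) (measure_singleton x)⟩

lemma Φ_nonneg (t : ℝ) : 0 ≤ Φ t := cdf_nonneg _ _

lemma Φ_le_one (t : ℝ) : Φ t ≤ 1 := cdf_le_one _ _

lemma Φ_mono : Monotone Φ := monotone_cdf _

lemma stdGauss_Iic (t : ℝ) : stdGauss (Iic t) = ENNReal.ofReal (Φ t) :=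
  (ofReal_cdf _ t).symm

lemma stdGauss_Iio (t : ℝ) : stdGauss (Iio t) = ENNReal.ofReal (Φ t) := by
  rw [← stdGauss_Iic]
  exact measure_congr Iio_ae_eq_Iic

lemma stdGauss_map_neg : stdGauss.map (fun x => -x) = stdGauss := by
  have h := gaussianReal_map_const_mul (μ := 0) (v := 1) (-1)
  have h2 : (fun x : ℝ => -x) = (fun x : ℝ => (-1) * x) := by funext x; ring
  rw [stdGauss, h2, h]
  congr 1
  · ring
  · ext
    norm_num

lemma Φ_neg (t : ℝ) : Φ (-t) = 1 - Φ t := by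
  have h1 : stdGauss (Iic (-t)) = stdGauss (Ici t) := by
    conv_lhs => rw [← stdGauss_map_neg]
    rw [Measure.map_apply measurable_neg measurableSet_Iic]
    congr 1
    ext x
    simp
  have h2 : stdGauss (Ici t) = stdGauss (Ioi t) :=
    (measure_congr Ioi_ae_eq_Ici).symm
  have h3 : stdGauss (Ioi t) = 1 - stdGauss (Iic t) := by
    rw [← Set.compl_Iic, measure_compl measurableSet_Iic (measure_ne_top _ _),
      measure_univ]
  have h4 : ENNReal.ofReal (Φ (-t)) = 1 - ENNReal.ofReal (Φ t) := by
    rw [← stdGauss_Iic, ← stdGauss_Iic, h1, h2, h3]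
  have h5 : ENNReal.ofReal (Φ t) ≤ 1 := by
    rw [← ENNReal.ofReal_one]
    exact ENNReal.ofReal_le_ofReal (Φ_le_one t)
  have := congrArg ENNReal.toReal h4
  rwa [ENNReal.toReal_ofReal (Φ_nonneg _),
    ENNReal.toReal_sub_of_le h5 ENNReal.one_ne_top, ENNReal.toReal_one,
    ENNReal.toReal_ofReal (Φ_nonneg _)] at this

lemma stdGauss_Ioi (t : ℝ) : stdGauss (Ioi t) = ENNReal.ofReal (Φ (-t)) := by
  rw [← Set.compl_Iic, measure_compl measurableSet_Iic (measure_ne_top _ _),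
    measure_univ, stdGauss_Iic, Φ_neg]
  rw [ENNReal.ofReal_sub _ (Φ_nonneg t), ENNReal.ofReal_one]

lemma stdGauss_Ioc {a b : ℝ} (hab : a ≤ b) :
    stdGauss (Ioc a b) = ENNReal.ofReal (Φ b - Φ a) := by
  have hsub : Iic a ⊆ Iic b := Iic_subset_Iic.2 hab
  rw [← Iic_sdiff_Iic, measure_diff hsub measurableSet_Iic.nullMeasurableSet
    (measure_ne_top _ _), stdGauss_Iic, stdGauss_Iic,
    ENNReal.ofReal_sub _ (Φ_nonneg a)]

/-- Comparison of measures from pointwise density comparison. -/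
lemma meas_cmp {K : ℝ} (hK : 0 ≤ K) (m : ℝ) {S : Set ℝ} (hS : MeasurableSet S)
    (h : ∀ u ∈ S, gaussianPDFReal 0 1 u ≤ K * gaussianPDFReal m 1 u) :
    stdGauss S ≤ ENNReal.ofReal K * gaussianReal m 1 S := by
  rw [stdGauss, gaussianReal_apply 0 one_ne_zero S, gaussianReal_apply m one_ne_zero S,
    ← lintegral_const_mul (ENNReal.ofReal K) (measurable_gaussianPDF m 1)]
  refine setLIntegral_mono ((measurable_gaussianPDF m 1).const_mul _) (fun u hu => ?_)
  rw [gaussianPDF, gaussianPDF, ← ENNReal.ofReal_mul hK]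
  exact ENNReal.ofReal_le_ofReal (h u hu)

lemma shift_meas (m : ℝ) {S : Set ℝ} (hS : MeasurableSet S) :
    gaussianReal m 1 S = stdGauss ((fun x => x + m) ⁻¹' S) := by
  have h := gaussianReal_map_add_const (μ := 0) (v := 1) m
  rw [zero_add] at h
  rw [← h, Measure.map_apply (measurable_add_const m) hS, stdGauss]

lemma gaussianPDFReal_one (m u : ℝ) :
    gaussianPDFReal m 1 u = (Real.sqrt (2 * Real.pi))⁻¹ * Real.exp (-(u - m) ^ 2 / 2) := by
  simp [gaussianPDFReal]

/-- Key log-supermodularity inequality for the normal CDF. -/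
lemma key {x y s : ℝ} (hs : 0 ≤ s) (hxy : x ≤ y) :
    Φ (x - s) * Φ y ≤ Φ x * Φ (y - s) := by
  obtain ⟨d, hd⟩ : ∃ d, d = y - x := ⟨y - x, rfl⟩
  have hd0 : 0 ≤ d := by linarith
  obtain ⟨k, hk⟩ : ∃ k, k = d * (x - s) + d ^ 2 / 2 := ⟨_, rfl⟩
  obtain ⟨K, hK⟩ : ∃ K, K = Real.exp k := ⟨_, rfl⟩
  have hKpos : 0 < K := hK ▸ Real.exp_pos _
  have hCpos : (0:ℝ) < (Real.sqrt (2 * Real.pi))⁻¹ := by positivity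
  -- (i) Φ (x - s) ≤ K * Φ (y - s)
  have h1 : Φ (x - s) ≤ K * Φ (y - s) := by
    have hpt : ∀ u ∈ Iic (x - s),
        gaussianPDFReal 0 1 u ≤ K * gaussianPDFReal (-d) 1 u := by
      intro u hu
      simp only [Set.mem_Iic] at hu
      rw [gaussianPDFReal_one, gaussianPDFReal_one]
      have harg : -(u - 0) ^ 2 / 2 ≤ k + -(u - -d) ^ 2 / 2 := by
        have hmul : u * d ≤ (x - s) * d := mul_le_mul_of_nonneg_right hu hd0
        nlinarith [hmul]
      calc (Real.sqrt (2 * Real.pi))⁻¹ * Real.exp (-(u - 0) ^ 2 / 2)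
          ≤ (Real.sqrt (2 * Real.pi))⁻¹ * Real.exp (k + -(u - -d) ^ 2 / 2) :=
            mul_le_mul_of_nonneg_left (Real.exp_le_exp.2 harg) hCpos.le
        _ = K * ((Real.sqrt (2 * Real.pi))⁻¹ * Real.exp (-(u - -d) ^ 2 / 2)) := by
            rw [Real.exp_add, hK]; ring
    have hmeas := meas_cmp hKpos.le (-d) measurableSet_Iic hpt
    rw [shift_meas (-d) measurableSet_Iic,
      show (fun x => x + -d) ⁻¹' Iic (x - s) = Iic (y - s) by
        ext u
        simp only [Set.mem_preimage, Set.mem_Iic]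
        constructor <;> intro <;> linarith,
      stdGauss_Iic, stdGauss_Iic, ← ENNReal.ofReal_mul hKpos.le] at hmeas
    exact (ENNReal.ofReal_le_ofReal_iff
      (mul_nonneg hKpos.le (Φ_nonneg _))).1 hmeas
  -- (ii) Φ y - Φ (y - s) ≤ K⁻¹ * (Φ x - Φ (x - s))
  have h2 : Φ y - Φ (y - s) ≤ K⁻¹ * (Φ x - Φ (x - s)) := by
    have hpt : ∀ v ∈ Ioc (y - s) y,
        gaussianPDFReal 0 1 v ≤ K⁻¹ * gaussianPDFReal d 1 v := by
      intro v hv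
      have hv1 : y - s < v := hv.1
      rw [gaussianPDFReal_one, gaussianPDFReal_one]
      have harg : -(v - 0) ^ 2 / 2 ≤ -k + -(v - d) ^ 2 / 2 := by
        have hmul : (y - s) * d ≤ v * d := mul_le_mul_of_nonneg_right hv1.le hd0
        nlinarith [hmul]
      calc (Real.sqrt (2 * Real.pi))⁻¹ * Real.exp (-(v - 0) ^ 2 / 2)
          ≤ (Real.sqrt (2 * Real.pi))⁻¹ * Real.exp (-k + -(v - d) ^ 2 / 2) :=
            mul_le_mul_of_nonneg_left (Real.exp_le_exp.2 harg) hCpos.le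
        _ = K⁻¹ * ((Real.sqrt (2 * Real.pi))⁻¹ * Real.exp (-(v - d) ^ 2 / 2)) := by
            rw [Real.exp_add, hK, ← Real.exp_neg]; ring
    have hmeas := meas_cmp (inv_nonneg.2 hKpos.le) d measurableSet_Ioc hpt
    have hys : y - s ≤ y := by linarith
    have hxs : x - s ≤ x := by linarith
    rw [shift_meas d measurableSet_Ioc,
      show (fun u => u + d) ⁻¹' Ioc (y - s) y = Ioc (x - s) x by
        ext u
        simp only [Set.mem_preimage, Set.mem_Ioc]
        constructor <;> rintro ⟨hu1, hu2⟩ <;> exact ⟨by linarith, by linarith⟩,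
      stdGauss_Ioc hys, stdGauss_Ioc hxs,
      ← ENNReal.ofReal_mul (inv_nonneg.2 hKpos.le)] at hmeas
    exact (ENNReal.ofReal_le_ofReal_iff
      (mul_nonneg (inv_nonneg.2 hKpos.le)
        (sub_nonneg.2 (Φ_mono hxs)))).1 hmeas
  -- combine
  have hA : 0 ≤ Φ (x - s) := Φ_nonneg _
  have hB' : 0 ≤ Φ (y - s) := Φ_nonneg _
  have hBB' : 0 ≤ Φ y - Φ (y - s) := sub_nonneg.2 (Φ_mono (by linarith))
  have hprod : Φ (x - s) * (Φ y - Φ (y - s))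
      ≤ (K * Φ (y - s)) * (K⁻¹ * (Φ x - Φ (x - s))) :=
    mul_le_mul h1 h2 hBB' (mul_nonneg hKpos.le hB')
  have hKK : K * K⁻¹ = 1 := mul_inv_cancel₀ hKpos.ne'
  rw [show (K * Φ (y - s)) * (K⁻¹ * (Φ x - Φ (x - s)))
      = (K * K⁻¹) * (Φ (y - s) * (Φ x - Φ (x - s))) by ring, hKK, one_mul] at hprod
  nlinarith [hprod]

/-- Core real inequality, both means nonnegative. -/
lemma core {c a b : ℝ} (hc : 0 ≤ c) (ha : 0 ≤ a) (hb : 0 ≤ b) :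
    Φ (-c - a) * Φ (b - c) + Φ (a - c) * Φ (-c - b) ≤ Φ (-c) := by
  have t1 : Φ (-c - a) * Φ (b - c) ≤ Φ (-c) * Φ (b - c - a) :=
    key (x := -c) (y := b - c) ha (by linarith)
  have t2 : Φ (-c - b) * Φ (a - c) ≤ Φ (-c) * Φ (a - c - b) :=
    key (x := -c) (y := a - c) hb (by linarith)
  have hsum : Φ (b - c - a) + Φ (a - c - b) ≤ 1 := by
    have h1 : Φ (a - c - b) = 1 - Φ (b + c - a) := by
      rw [show a - c - b = -(b + c - a) by ring, Φ_neg]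
    have h2 : Φ (b - c - a) ≤ Φ (b + c - a) := Φ_mono (by linarith)
    linarith
  have h0 : 0 ≤ Φ (-c) := Φ_nonneg _
  have h3 : Φ (-c) * (Φ (b - c - a) + Φ (a - c - b)) ≤ Φ (-c) := by
    have := mul_le_mul_of_nonneg_left hsum h0
    simpa using this
  nlinarith [t1, t2, h3]

/-- Core real inequality, both means nonpositive. -/
lemma core_neg {c a b : ℝ} (hc : 0 ≤ c) (ha : a ≤ 0) (hb : b ≤ 0) :
    Φ (-c - a) * Φ (b - c) + Φ (a - c) * Φ (-c - b) ≤ Φ (-c) := by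
  have h' := core hc (neg_nonneg.2 ha) (neg_nonneg.2 hb)
  rw [show -c - -a = a - c by ring, show -a - c = -c - a by ring,
    show -b - c = -c - b by ring, show -c - -b = b - c by ring] at h'
  linarith

/-- Core real inequality, product of means nonnegative. -/
lemma core' {c a b : ℝ} (hc : 0 ≤ c) (hab : a * b ≥ 0) :
    Φ (-c - a) * Φ (b - c) + Φ (a - c) * Φ (-c - b) ≤ Φ (-c) := by
  rcases le_total 0 a with h1 | h1 <;> rcases le_total 0 b with h2 | h2
  · exact core hc h1 h2
  · have hz : a * b = 0 :=
      le_antisymm (mul_nonpos_of_nonneg_of_nonpos h1 h2) hab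
    rcases mul_eq_zero.1 hz with hz | hz
    · subst hz; exact core_neg hc le_rfl h2
    · subst hz; exact core hc h1 le_rfl
  · have hz : a * b = 0 :=
      le_antisymm (mul_nonpos_of_nonpos_of_nonneg h1 h2) hab
    rcases mul_eq_zero.1 hz with hz | hz
    · subst hz; exact core hc le_rfl h2
    · subst hz; exact core_neg hc h1 le_rfl
  · exact core_neg hc h1 h2

/-- Size control of the recommended sign-congruence test (uncorrelated case):
for independent standard normals and any null parameter, the rejection
probability is at most α. -/
theorem stmt0 (α c : ℝ) (hα : α ∈ Set.Ioo (0:ℝ) (1/2)) (hc : Φ c = 1 - α)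
    (μ₁ μ₂ : ℝ) (h : μ₁ * μ₂ ≥ 0) :
    P2 {p : ℝ × ℝ | (μ₁ + p.1) * (μ₂ + p.2) < 0 ∧ c < |μ₁ + p.1| ∧ c < |μ₂ + p.2|}
      ≤ ENNReal.ofReal α := by
  obtain ⟨hα0, hα2⟩ := hα
  have hΦ0 : Φ 0 = 1 / 2 := by
    have := Φ_neg 0
    rw [neg_zero] at this
    linarith
  have hc0 : 0 ≤ c := by
    by_contra hcneg
    push_neg at hcneg
    have : Φ c ≤ Φ 0 := Φ_mono hcneg.le
    rw [hΦ0, hc] at this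
    linarith
  have hαΦ : α = Φ (-c) := by rw [Φ_neg, hc]; ring
  set E := {p : ℝ × ℝ | (μ₁ + p.1) * (μ₂ + p.2) < 0 ∧ c < |μ₁ + p.1| ∧ c < |μ₂ + p.2|}
    with hE
  have hsub : E ⊆ (Iio (-c - μ₁) ×ˢ Ioi (c - μ₂)) ∪ (Ioi (c - μ₁) ×ˢ Iio (-c - μ₂)) := by
    rintro ⟨x1, x2⟩ ⟨hprod, h1, h2⟩
    rcases mul_neg_iff.1 hprod with ⟨hp, hn⟩ | ⟨hn, hp⟩
    · right
      rw [abs_of_pos hp] at h1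
      rw [abs_of_neg hn] at h2
      constructor
      · simp only [Set.mem_Ioi]; linarith
      · simp only [Set.mem_Iio]; linarith
    · left
      rw [abs_of_neg hn] at h1
      rw [abs_of_pos hp] at h2
      constructor
      · simp only [Set.mem_Iio]; linarith
      · simp only [Set.mem_Ioi]; linarith
  have hm1 : P2 (Iio (-c - μ₁) ×ˢ Ioi (c - μ₂))
      = ENNReal.ofReal (Φ (-c - μ₁) * Φ (μ₂ - c)) := by
    rw [P2, Measure.prod_prod, stdGauss_Iio, stdGauss_Ioi,
      show -(c - μ₂) = μ₂ - c by ring,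
      ← ENNReal.ofReal_mul (Φ_nonneg _)]
  have hm2 : P2 (Ioi (c - μ₁) ×ˢ Iio (-c - μ₂))
      = ENNReal.ofReal (Φ (μ₁ - c) * Φ (-c - μ₂)) := by
    rw [P2, Measure.prod_prod, stdGauss_Ioi, stdGauss_Iio,
      show -(c - μ₁) = μ₁ - c by ring,
      ← ENNReal.ofReal_mul (Φ_nonneg _)]
  have hreal : Φ (-c - μ₁) * Φ (μ₂ - c) + Φ (μ₁ - c) * Φ (-c - μ₂) ≤ α := by
    rw [hαΦ]
    exact core' hc0 h
  calc P2 E ≤ P2 ((Iio (-c - μ₁) ×ˢ Ioi (c - μ₂)) ∪ (Ioi (c - μ₁) ×ˢ Iio (-c - μ₂))) :=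
        measure_mono hsub
    _ ≤ P2 (Iio (-c - μ₁) ×ˢ Ioi (c - μ₂)) + P2 (Ioi (c - μ₁) ×ˢ Iio (-c - μ₂)) :=
        measure_union_le _ _
    _ = ENNReal.ofReal (Φ (-c - μ₁) * Φ (μ₂ - c) + Φ (μ₁ - c) * Φ (-c - μ₂)) := by
        rw [hm1, hm2, ← ENNReal.ofReal_add
          (mul_nonneg (Φ_nonneg _) (Φ_nonneg _)) (mul_nonneg (Φ_nonneg _) (Φ_nonneg _))]
    _ ≤ ENNReal.ofReal α := ENNReal.ofReal_le_ofReal hreal
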